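/- Let m ≥ 1, let A, B ∈ ℙ_m with det A = α and det B = β (so α, β are positive reals), and let t ∈ (0,1). If A^{-1} ∼ B, then A ♮_t B = [ (α β)^{3t/m} / det((α β)^{1/m} I + A B)^{2t/m} ] · (A^{-1} + (α β)^{-1/m} B)^t A (A^{-1} + (α β)^{-1/m} B)^t. (Here det((α β)^{1/m} I + A B) is a positive real number, since the eigenvalues of A B are positive, and real powers of it are taken in ℝ.) -/

import Mathlib

open Matrix
open scoped ComplexOrder

/-- Real power `A^t = exp(t · log A)` of a Hermitian positive definite matrix, defined via
the functional calculus (spectral decomposition). -/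
noncomputable def mpow {n : ℕ} (A : Matrix (Fin n) (Fin n) ℂ) (t : ℝ) :
    Matrix (Fin n) (Fin n) ℂ :=
  if hA : A.IsHermitian then
    (hA.eigenvectorUnitary : Matrix (Fin n) (Fin n) ℂ) *
      Matrix.diagonal (fun i => ((hA.eigenvalues i ^ t : ℝ) : ℂ)) *
      (star (hA.eigenvectorUnitary : Matrix (Fin n) (Fin n) ℂ))
  else A

/-- Logarithm of a Hermitian positive definite matrix via the functional calculus. -/
noncomputable def mlog {n : ℕ} (A : Matrix (Fin n) (Fin n) ℂ) : Matrix (Fin n) (Fin n) ℂ :=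
  if hA : A.IsHermitian then
    (hA.eigenvectorUnitary : Matrix (Fin n) (Fin n) ℂ) *
      Matrix.diagonal (fun i => ((Real.log (hA.eigenvalues i) : ℝ) : ℂ)) *
      (star (hA.eigenvectorUnitary : Matrix (Fin n) (Fin n) ℂ))
  else A

/-- Metric geometric mean `A # B = A^{1/2} (A^{-1/2} B A^{-1/2})^{1/2} A^{1/2}`. -/
noncomputable def geomMean {n : ℕ} (A B : Matrix (Fin n) (Fin n) ℂ) :
    Matrix (Fin n) (Fin n) ℂ :=
  mpow A (1/2) * mpow (mpow A (-(1/2)) * B * mpow A (-(1/2))) (1/2) * mpow A (1/2)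

/-- Weighted spectral geometric mean `A ♮_t B = (A⁻¹ # B)^t A (A⁻¹ # B)^t`. -/
noncomputable def spectralMean {n : ℕ} (t : ℝ) (A B : Matrix (Fin n) (Fin n) ℂ) :
    Matrix (Fin n) (Fin n) ℂ :=
  mpow (geomMean A⁻¹ B) t * A * mpow (geomMean A⁻¹ B) t

/-- The tolerance relation `A ∼ B`: there are `a, b > 0` with
`√(ab) = det(A⁻¹B)^{1/m}` and `σ(A⁻¹B) = {a, b}`. -/
def tolRel {m : ℕ} (A B : Matrix (Fin m) (Fin m) ℂ) : Prop :=
  ∃ a b : ℝ, 0 < a ∧ 0 < b ∧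
    (Real.sqrt (a * b) : ℂ) = (A⁻¹ * B).det ^ ((1 : ℂ) / (m : ℂ)) ∧
    spectrum ℂ (A⁻¹ * B) = {(a : ℂ), (b : ℂ)}

section Helpers
variable {n : ℕ}

lemma unitary_mul_star {V : Matrix (Fin n) (Fin n) ℂ}
    (hV : V ∈ Matrix.unitaryGroup (Fin n) ℂ) : V * star V = 1 :=
  (Matrix.mem_unitaryGroup_iff).mp hV

lemma star_mul_unitary {V : Matrix (Fin n) (Fin n) ℂ}
    (hV : V ∈ Matrix.unitaryGroup (Fin n) ℂ) : star V * V = 1 :=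
  (Matrix.mem_unitaryGroup_iff').mp hV

/-- well-definedness of the functional calculus -/
lemma funcalc_welldef {V W : Matrix (Fin n) (Fin n) ℂ}
    (hV : V ∈ Matrix.unitaryGroup (Fin n) ℂ) (hW : W ∈ Matrix.unitaryGroup (Fin n) ℂ)
    (e d : Fin n → ℝ) (f : ℝ → ℝ)
    (h : V * Matrix.diagonal (fun i => (e i : ℂ)) * star V
        = W * Matrix.diagonal (fun i => (d i : ℂ)) * star W) :
    V * Matrix.diagonal (fun i => (f (e i) : ℂ)) * star V
        = W * Matrix.diagonal (fun i => (f (d i) : ℂ)) * star W := by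
  set X := star V * W with hX
  have key : Matrix.diagonal (fun i => (e i : ℂ)) * X = X * Matrix.diagonal (fun i => (d i : ℂ)) := by
    calc Matrix.diagonal (fun i => (e i : ℂ)) * X
        = (star V * V) * Matrix.diagonal (fun i => (e i : ℂ)) * (star V * W) := by
          rw [star_mul_unitary hV, one_mul, hX]
      _ = star V * (V * Matrix.diagonal (fun i => (e i : ℂ)) * star V) * W := by
          noncomm_ring
      _ = star V * (W * Matrix.diagonal (fun i => (d i : ℂ)) * star W) * W := by rw [h]
      _ = (star V * W) * Matrix.diagonal (fun i => (d i : ℂ)) * (star W * W) := by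
          noncomm_ring
      _ = X * Matrix.diagonal (fun i => (d i : ℂ)) := by
          rw [star_mul_unitary hW, mul_one, hX]
  have key2 : Matrix.diagonal (fun i => (f (e i) : ℂ)) * X
      = X * Matrix.diagonal (fun i => (f (d i) : ℂ)) := by
    ext i j
    have hij : (e i : ℂ) * X i j = X i j * (d j : ℂ) := by
      have h' := congrFun (congrFun key i) j
      simpa only [Matrix.diagonal_mul, Matrix.mul_diagonal] using h'
    rw [Matrix.diagonal_mul, Matrix.mul_diagonal]
    rcases eq_or_ne (X i j) 0 with h0 | h0
    · simp [h0]
    · have h2 : X i j * ((e i : ℂ) - (d j : ℂ)) = 0 := by linear_combination hij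
      rcases mul_eq_zero.mp h2 with h3 | h3
      · exact absurd h3 h0
      · have he' : e i = d j := by exact_mod_cast sub_eq_zero.mp h3
        rw [he', mul_comm]
  calc V * Matrix.diagonal (fun i => (f (e i) : ℂ)) * star V
      = V * Matrix.diagonal (fun i => (f (e i) : ℂ)) * star V * (W * star W) := by
        rw [unitary_mul_star hW, mul_one]
    _ = V * (Matrix.diagonal (fun i => (f (e i) : ℂ)) * X) * star W := by
        rw [hX]; noncomm_ring
    _ = V * (X * Matrix.diagonal (fun i => (f (d i) : ℂ))) * star W := by rw [key2]
    _ = (V * star V) * (W * Matrix.diagonal (fun i => (f (d i) : ℂ)) * star W) := by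
        rw [hX]; noncomm_ring
    _ = W * Matrix.diagonal (fun i => (f (d i) : ℂ)) * star W := by
        rw [unitary_mul_star hV, one_mul]

lemma mpow_eq_of_decomp {A : Matrix (Fin n) (Fin n) ℂ} (hA : A.IsHermitian)
    {V : Matrix (Fin n) (Fin n) ℂ} (hV : V ∈ Matrix.unitaryGroup (Fin n) ℂ)
    (e : Fin n → ℝ) (h : A = V * Matrix.diagonal (fun i => (e i : ℂ)) * star V) (t : ℝ) :
    mpow A t = V * Matrix.diagonal (fun i => ((e i ^ t : ℝ) : ℂ)) * star V := by
  rw [mpow, dif_pos hA]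
  have hdec : (hA.eigenvectorUnitary : Matrix (Fin n) (Fin n) ℂ) *
      Matrix.diagonal (fun i => ((hA.eigenvalues i : ℝ) : ℂ)) *
      star (hA.eigenvectorUnitary : Matrix (Fin n) (Fin n) ℂ)
      = V * Matrix.diagonal (fun i => (e i : ℂ)) * star V := by
    rw [← h]
    convert hA.spectral_theorem.symm using 3
    rfl
  exact funcalc_welldef hA.eigenvectorUnitary.2 hV _ e (fun x => x ^ t) hdec

end Helpers

section Helpers2
variable {n : ℕ}

lemma conj_mul_conj {V : Matrix (Fin n) (Fin n) ℂ}
    (hV : V ∈ Matrix.unitaryGroup (Fin n) ℂ) (p q : Fin n → ℂ) :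
    (V * Matrix.diagonal p * star V) * (V * Matrix.diagonal q * star V)
      = V * Matrix.diagonal (fun i => p i * q i) * star V := by
  calc (V * Matrix.diagonal p * star V) * (V * Matrix.diagonal q * star V)
      = V * (Matrix.diagonal p * (star V * V) * Matrix.diagonal q) * star V := by noncomm_ring
    _ = V * (Matrix.diagonal p * Matrix.diagonal q) * star V := by
        rw [star_mul_unitary hV, mul_one]
    _ = V * Matrix.diagonal (fun i => p i * q i) * star V := by
        rw [Matrix.diagonal_mul_diagonal]

lemma conj_diag_isHermitian {V : Matrix (Fin n) (Fin n) ℂ} (e : Fin n → ℝ) :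
    (V * Matrix.diagonal (fun i => (e i : ℂ)) * star V).IsHermitian := by
  have hD : star (Matrix.diagonal (fun i => (e i : ℂ))) = Matrix.diagonal (fun i => (e i : ℂ)) := by
    rw [Matrix.star_eq_conjTranspose, Matrix.diagonal_conjTranspose]
    congr! with i
    simp [Pi.star_def, Complex.conj_ofReal]
  rw [Matrix.IsHermitian, ← Matrix.star_eq_conjTranspose]
  simp only [StarMul.star_mul, star_star, hD, mul_assoc]

lemma conj_const_diag {V : Matrix (Fin n) (Fin n) ℂ}
    (hV : V ∈ Matrix.unitaryGroup (Fin n) ℂ) (c : ℂ) :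
    V * Matrix.diagonal (fun _ => c) * star V = c • 1 := by
  have : Matrix.diagonal (fun _ : Fin n => c) = c • (1 : Matrix (Fin n) (Fin n) ℂ) := by
    ext i j
    simp [Matrix.diagonal_apply, Matrix.one_apply, mul_ite, mul_one, mul_zero]
  rw [this, mul_smul_comm, smul_mul_assoc, mul_one, unitary_mul_star hV]

lemma real_smul_eq (r : ℝ) (X : Matrix (Fin n) (Fin n) ℂ) : r • X = (r : ℂ) • X := by
  ext i j
  simp [Complex.real_smul]

lemma spectrum_conj (S S' X : Matrix (Fin n) (Fin n) ℂ) (h1 : S * S' = 1) (h2 : S' * S = 1) :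
    spectrum ℂ (S * X * S') = spectrum ℂ X := by
  have hS : IsUnit S := ⟨⟨S, S', h1, h2⟩, rfl⟩
  have hS' : IsUnit S' := ⟨⟨S', S, h2, h1⟩, rfl⟩
  ext z
  have key : algebraMap ℂ (Matrix (Fin n) (Fin n) ℂ) z - S * X * S'
      = S * (algebraMap ℂ (Matrix (Fin n) (Fin n) ℂ) z - X) * S' := by
    rw [Matrix.mul_sub, Matrix.sub_mul]
    congr 1
    rw [Algebra.algebraMap_eq_smul_one, mul_smul_comm, smul_mul_assoc, mul_one, h1]
  simp only [spectrum.mem_iff, key]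
  constructor
  · intro hcon hu
    exact hcon ((hS.mul hu).mul hS')
  · intro hcon hu
    have : algebraMap ℂ (Matrix (Fin n) (Fin n) ℂ) z - X
        = S' * (S * (algebraMap ℂ (Matrix (Fin n) (Fin n) ℂ) z - X) * S') * S := by
      calc algebraMap ℂ (Matrix (Fin n) (Fin n) ℂ) z - X
          = (S' * S) * (algebraMap ℂ (Matrix (Fin n) (Fin n) ℂ) z - X) * (S' * S) := by
            rw [h2, one_mul, mul_one]
        _ = S' * (S * (algebraMap ℂ (Matrix (Fin n) (Fin n) ℂ) z - X) * S') * S := by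
            noncomm_ring
    rw [this] at hcon
    exact hcon ((hS'.mul hu).mul hS)

lemma det_conj_eq {S S' : Matrix (Fin n) (Fin n) ℂ} (h1 : S * S' = 1)
    (X : Matrix (Fin n) (Fin n) ℂ) : (S * X * S').det = X.det := by
  have h3 : S.det * S'.det = 1 := by rw [← Matrix.det_mul, h1, Matrix.det_one]
  calc (S * X * S').det = S.det * X.det * S'.det := by rw [Matrix.det_mul, Matrix.det_mul]
    _ = X.det * (S.det * S'.det) := by ring
    _ = X.det := by rw [h3, mul_one]

end Helpers2

set_option maxHeartbeats 2000000 in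
theorem spectralMean_of_tolRel {m : ℕ} (hm : 1 ≤ m)
    (A B : Matrix (Fin m) (Fin m) ℂ) (hA : A.PosDef) (hB : B.PosDef)
    (α β : ℝ) (hα : A.det = (α : ℂ)) (hβ : B.det = (β : ℂ))
    (t : ℝ) (ht : t ∈ Set.Ioo (0 : ℝ) 1) (htol : tolRel A⁻¹ B) :
    spectralMean t A B =
      ((α * β) ^ (3 * t / m) /
          ((((α * β) ^ ((1 : ℝ) / m)) • (1 : Matrix (Fin m) (Fin m) ℂ) + A * B).det.re
            ^ (2 * t / m))) •
        (mpow (A⁻¹ + ((α * β) ^ (-(1 : ℝ) / m)) • B) t * A *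
          mpow (A⁻¹ + ((α * β) ^ (-(1 : ℝ) / m)) • B) t) := by
  classical
  obtain ⟨ht0, ht1⟩ := ht
  obtain ⟨a, b, ha, hb, habc, hspec⟩ := htol
  have hmR : (m : ℝ) ≠ 0 := Nat.cast_ne_zero.mpr (by omega)
  have hαpos : 0 < α := by
    have h := hA.det_pos; rw [hα] at h; exact Complex.zero_lt_real.mp h
  have hβpos : 0 < β := by
    have h := hB.det_pos; rw [hβ] at h; exact Complex.zero_lt_real.mp h
  have hαβ : 0 < α * β := mul_pos hαpos hβpos
  have hdetA0 : A.det ≠ 0 := by rw [hα]; exact_mod_cast hαpos.ne'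
  have hAinv : A⁻¹⁻¹ = A := Matrix.nonsing_inv_nonsing_inv A (Ne.isUnit hdetA0)
  rw [hAinv] at habc hspec
  set c : ℝ := (α * β) ^ ((1 : ℝ) / m) with hcdef
  have hcpos : 0 < c := Real.rpow_pos_of_pos hαβ _
  have hdetAB : (A * B).det = ((α * β : ℝ) : ℂ) := by
    rw [Matrix.det_mul, hα, hβ]; push_cast; ring
  have hsqrt : Real.sqrt (a * b) = c := by
    have h1 : ((Real.sqrt (a * b) : ℝ) : ℂ) = ((c : ℝ) : ℂ) := by
      rw [habc, hdetAB, hcdef, Complex.ofReal_cpow hαβ.le]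
      norm_num
    exact_mod_cast h1
  have hab : a * b = c ^ 2 := by
    rw [← hsqrt, Real.sq_sqrt (by positivity)]
  have hcm : c ^ m = α * β := by
    rw [hcdef, ← Real.rpow_natCast ((α * β) ^ ((1 : ℝ) / m)) m, ← Real.rpow_mul hαβ.le,
      one_div, inv_mul_cancel₀ hmR, Real.rpow_one]
  -- eigendecomposition of A
  set V : Matrix (Fin m) (Fin m) ℂ := (hA.1.eigenvectorUnitary : Matrix (Fin m) (Fin m) ℂ) with hVdef
  set e : Fin m → ℝ := hA.1.eigenvalues with hedef
  have hVmem : V ∈ Matrix.unitaryGroup (Fin m) ℂ := hA.1.eigenvectorUnitary.2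
  have hdecA : A = V * Matrix.diagonal (fun i => (e i : ℂ)) * star V := by
    convert hA.1.spectral_theorem using 3
    rfl
  have hepos : ∀ i, 0 < e i := hA.eigenvalues_pos
  clear_value V e
  -- square roots of A
  set S : Matrix (Fin m) (Fin m) ℂ :=
    V * Matrix.diagonal (fun i => ((e i ^ ((1:ℝ)/2) : ℝ) : ℂ)) * star V with hSdef
  set S' : Matrix (Fin m) (Fin m) ℂ :=
    V * Matrix.diagonal (fun i => (((e i ^ ((1:ℝ)/2))⁻¹ : ℝ) : ℂ)) * star V with hS'def
  have hgpos : ∀ i, 0 < e i ^ ((1:ℝ)/2) := fun i => Real.rpow_pos_of_pos (hepos i) _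
  have hdecAinv : A⁻¹ = V * Matrix.diagonal (fun i => (((e i)⁻¹ : ℝ) : ℂ)) * star V := by
    apply Matrix.inv_eq_right_inv
    rw [hdecA, conj_mul_conj hVmem]
    have h1 : (fun i => ((e i : ℝ) : ℂ) * (((e i)⁻¹ : ℝ) : ℂ)) = fun _ : Fin m => (1 : ℂ) := by
      funext i
      push_cast
      rw [mul_inv_cancel₀]
      exact_mod_cast (hepos i).ne'
    rw [h1, Matrix.diagonal_one, mul_one, unitary_mul_star hVmem]
  have hmpowAinvhalf : mpow A⁻¹ (1/2) = S' := by
    rw [mpow_eq_of_decomp (hA.inv.1) hVmem _ hdecAinv (1/2), hS'def]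
    have h1 : (fun i => (((e i)⁻¹ ^ ((1:ℝ)/2) : ℝ) : ℂ))
        = fun i => (((e i ^ ((1:ℝ)/2))⁻¹ : ℝ) : ℂ) := by
      funext i
      rw [Real.inv_rpow (hepos i).le]
    rw [h1]
  have hmpowAinvneghalf : mpow A⁻¹ (-(1/2)) = S := by
    rw [mpow_eq_of_decomp (hA.inv.1) hVmem _ hdecAinv (-(1/2)), hSdef]
    have h1 : (fun i => (((e i)⁻¹ ^ (-(1/2) : ℝ) : ℝ) : ℂ))
        = fun i => ((e i ^ ((1:ℝ)/2) : ℝ) : ℂ) := by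
      funext i
      rw [Real.rpow_neg (inv_nonneg.mpr (hepos i).le), Real.inv_rpow (hepos i).le, inv_inv]
    rw [h1]
  have hSS' : S * S' = 1 := by
    rw [hSdef, hS'def, conj_mul_conj hVmem]
    have h1 : (fun i => ((e i ^ ((1:ℝ)/2) : ℝ) : ℂ) * (((e i ^ ((1:ℝ)/2))⁻¹ : ℝ) : ℂ))
        = fun _ : Fin m => (1 : ℂ) := by
      funext i
      push_cast
      rw [mul_inv_cancel₀]
      exact_mod_cast (hgpos i).ne'
    rw [h1, Matrix.diagonal_one, mul_one, unitary_mul_star hVmem]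
  have hS'S : S' * S = 1 := by
    rw [hSdef, hS'def, conj_mul_conj hVmem]
    have h1 : (fun i => (((e i ^ ((1:ℝ)/2))⁻¹ : ℝ) : ℂ) * ((e i ^ ((1:ℝ)/2) : ℝ) : ℂ))
        = fun _ : Fin m => (1 : ℂ) := by
      funext i
      push_cast
      rw [inv_mul_cancel₀]
      exact_mod_cast (hgpos i).ne'
    rw [h1, Matrix.diagonal_one, mul_one, unitary_mul_star hVmem]
  have hSS : S * S = A := by
    rw [hSdef, conj_mul_conj hVmem, hdecA]
    have h1 : (fun i => ((e i ^ ((1:ℝ)/2) : ℝ) : ℂ) * ((e i ^ ((1:ℝ)/2) : ℝ) : ℂ))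
        = fun i => ((e i : ℝ) : ℂ) := by
      funext i
      rw [← Complex.ofReal_mul, ← Real.rpow_add (hepos i)]
      norm_num
    rw [h1]
  have hS'S' : S' * S' = A⁻¹ := by
    rw [hS'def, conj_mul_conj hVmem, hdecAinv]
    have h1 : (fun i => (((e i ^ ((1:ℝ)/2))⁻¹ : ℝ) : ℂ) * (((e i ^ ((1:ℝ)/2))⁻¹ : ℝ) : ℂ))
        = fun i => (((e i)⁻¹ : ℝ) : ℂ) := by
      funext i
      rw [← Complex.ofReal_mul, ← mul_inv, ← Real.rpow_add (hepos i)]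
      norm_num
    rw [h1]
  have hSH : S.IsHermitian := hSdef ▸ conj_diag_isHermitian _
  have hS'H : S'.IsHermitian := hS'def ▸ conj_diag_isHermitian _
  clear_value S S'
  -- the middle matrix M
  set M : Matrix (Fin m) (Fin m) ℂ := S * B * S with hMdef
  have hMH : M.IsHermitian := by
    rw [Matrix.IsHermitian, hMdef]
    calc (S * B * S)ᴴ = Sᴴ * (Bᴴ * Sᴴ) := by
          rw [Matrix.conjTranspose_mul, Matrix.conjTranspose_mul]
      _ = S * B * S := by rw [hSH, hB.1, ← mul_assoc]
  set W : Matrix (Fin m) (Fin m) ℂ := (hMH.eigenvectorUnitary : Matrix (Fin m) (Fin m) ℂ) with hWdef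
  set d : Fin m → ℝ := hMH.eigenvalues with hddef
  have hWmem : W ∈ Matrix.unitaryGroup (Fin m) ℂ := hMH.eigenvectorUnitary.2
  have hdecM : M = W * Matrix.diagonal (fun i => (d i : ℂ)) * star W := by
    convert hMH.spectral_theorem using 3
    rfl
  clear_value W d
  have hABconj : A * B = S * M * S' := by
    calc A * B = (S * S) * B * (S * S') := by rw [hSS, hSS', mul_one]
      _ = S * (S * B * S) * S' := by noncomm_ring
      _ = S * M * S' := by rw [hMdef]
  have hspecM : spectrum ℂ M = {(a : ℂ), (b : ℂ)} := by
    rw [← hspec, hABconj, spectrum_conj S S' M hSS' hS'S]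
  have hd : ∀ i, d i = a ∨ d i = b := by
    intro i
    have h1 : ((d i : ℝ) : ℂ) ∈ spectrum ℂ M := by
      rw [hddef]
      simpa using spectrum.algebraMap_mem ℂ (hMH.eigenvalues_mem_spectrum_real i)
    rw [hspecM] at h1
    simp only [Set.mem_insert_iff, Set.mem_singleton_iff] at h1
    rcases h1 with h1 | h1
    · left; exact_mod_cast h1
    · right; exact_mod_cast h1
  have hdpos : ∀ i, 0 < d i := by
    intro i
    rcases hd i with h | h <;> rw [h] <;> assumption
  set s : ℝ := Real.sqrt a + Real.sqrt b with hsdef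
  have hspos : 0 < s := by
    have := Real.sqrt_pos.mpr ha
    have := Real.sqrt_pos.mpr hb
    rw [hsdef]; linarith
  have hsqab : Real.sqrt a * Real.sqrt b = c := by
    rw [← Real.sqrt_mul ha.le, hsqrt]
  have hsqa : Real.sqrt a * Real.sqrt a = a := Real.mul_self_sqrt ha.le
  have hsqb : Real.sqrt b * Real.sqrt b = b := Real.mul_self_sqrt hb.le
  have hhalf : ∀ i, d i ^ ((1:ℝ)/2) = s⁻¹ * (d i + c) := by
    intro i
    have key : ∀ x : ℝ, 0 < x → Real.sqrt x * s = x + c → x ^ ((1:ℝ)/2) = s⁻¹ * (x + c) := by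
      intro x hx hkey
      rw [← Real.sqrt_eq_rpow, eq_inv_mul_iff_mul_eq₀ hspos.ne', mul_comm s, hkey]
    rcases hd i with h | h <;> rw [h]
    · exact key a ha (by rw [hsdef]; linear_combination hsqa + hsqab)
    · exact key b hb (by rw [hsdef]; linear_combination hsqb + hsqab)
  -- mpow of M
  have hmpowM : mpow M (1/2) = s⁻¹ • (M + c • (1 : Matrix (Fin m) (Fin m) ℂ)) := by
    rw [mpow_eq_of_decomp hMH hWmem d hdecM (1/2)]
    have h1 : (fun i => ((d i ^ ((1:ℝ)/2) : ℝ) : ℂ))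
        = fun i => (s⁻¹ : ℂ) * ((d i : ℂ) + (c : ℂ)) := by
      funext i
      rw [hhalf i]
      push_cast
      ring
    rw [h1]
    have h2 : Matrix.diagonal (fun i => (s⁻¹ : ℂ) * ((d i : ℂ) + (c : ℂ)))
        = (s⁻¹ : ℂ) • (Matrix.diagonal (fun i => (d i : ℂ))
            + Matrix.diagonal (fun _ : Fin m => (c : ℂ))) := by
      ext i j
      by_cases h : i = j <;> simp [Matrix.diagonal_apply, h]
    rw [h2, mul_smul_comm, smul_mul_assoc, Matrix.mul_add, Matrix.add_mul,
      conj_const_diag hWmem, ← hdecM, real_smul_eq s⁻¹, real_smul_eq c,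
      Complex.ofReal_inv]
  -- geometric mean
  have hS'MS' : S' * M * S' = B := by
    rw [hMdef]
    calc S' * (S * B * S) * S' = (S' * S) * B * (S * S') := by noncomm_ring
      _ = B := by rw [hS'S, hSS', one_mul, mul_one]
  have hGeom : geomMean A⁻¹ B = (c / s) • (A⁻¹ + c⁻¹ • B) := by
    unfold geomMean
    rw [hmpowAinvhalf, hmpowAinvneghalf, ← hMdef, hmpowM,
      mul_smul_comm, smul_mul_assoc, Matrix.mul_add, Matrix.add_mul, hS'MS']
    have hS'cS' : S' * (c • (1 : Matrix (Fin m) (Fin m) ℂ)) * S' = c • A⁻¹ := by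
      rw [mul_smul_comm, smul_mul_assoc, mul_one, hS'S']
    rw [hS'cS']
    rw [smul_add, smul_add, smul_smul, smul_smul,
      show s⁻¹ * c = c / s by rw [div_eq_mul_inv]; ring,
      show (c/s) * c⁻¹ = s⁻¹ by rw [div_eq_mul_inv, mul_comm c s⁻¹, mul_assoc,
        mul_inv_cancel₀ hcpos.ne', mul_one]]
    exact add_comm _ _
  have hexp : (α * β) ^ (-(1:ℝ)/(m:ℝ)) = c⁻¹ := by
    rw [neg_div, Real.rpow_neg hαβ.le, ← hcdef]
  rw [hexp]
  set C : Matrix (Fin m) (Fin m) ℂ := A⁻¹ + c⁻¹ • B with hCdef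
  have hCpd : C.PosDef := by
    rw [hCdef]
    refine Matrix.PosDef.add hA.inv ⟨?_, ?_⟩
    · show (c⁻¹ • B)ᴴ = c⁻¹ • B
      rw [Matrix.conjTranspose_smul, star_trivial, hB.1]
    · intro x hx
      exact (hB.smul (inv_pos.mpr hcpos)).2 hx
  set Z : Matrix (Fin m) (Fin m) ℂ := (hCpd.1.eigenvectorUnitary : Matrix (Fin m) (Fin m) ℂ)
    with hZdef
  set f : Fin m → ℝ := hCpd.1.eigenvalues with hfdef
  have hZmem : Z ∈ Matrix.unitaryGroup (Fin m) ℂ := hCpd.1.eigenvectorUnitary.2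
  have hdecC : C = Z * Matrix.diagonal (fun i => (f i : ℂ)) * star Z := by
    convert hCpd.1.spectral_theorem using 3
    rfl
  have hfpos : ∀ i, 0 < f i := hCpd.eigenvalues_pos
  clear_value Z f
  have hdecG : geomMean A⁻¹ B
      = Z * Matrix.diagonal (fun i => ((c/s * f i : ℝ) : ℂ)) * star Z := by
    rw [hGeom, hdecC]
    have h1 : (fun i => ((c/s * f i : ℝ) : ℂ)) = fun i => ((c/s : ℝ) : ℂ) * (f i : ℂ) := by
      funext i; push_cast; ring
    have h2 : Matrix.diagonal (fun i => ((c/s : ℝ) : ℂ) * (f i : ℂ))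
        = ((c/s : ℝ) : ℂ) • Matrix.diagonal (fun i => (f i : ℂ)) := by
      ext i j
      by_cases h : i = j <;> simp [Matrix.diagonal_apply, h]
    rw [h1, h2, mul_smul_comm, smul_mul_assoc, real_smul_eq]
  have hGH : (geomMean A⁻¹ B).IsHermitian := by
    rw [hdecG]; exact conj_diag_isHermitian _
  have hmpowG : mpow (geomMean A⁻¹ B) t = ((c/s) ^ t : ℝ) • mpow C t := by
    rw [mpow_eq_of_decomp hGH hZmem _ hdecG t, mpow_eq_of_decomp hCpd.1 hZmem f hdecC t]
    have h1 : (fun i => (((c/s * f i) ^ t : ℝ) : ℂ))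
        = fun i => (((c/s)^t : ℝ) : ℂ) * ((f i ^ t : ℝ) : ℂ) := by
      funext i
      rw [Real.mul_rpow (by positivity) (hfpos i).le]
      push_cast; ring
    have h2 : Matrix.diagonal (fun i => (((c/s)^t : ℝ) : ℂ) * ((f i ^ t : ℝ) : ℂ))
        = (((c/s)^t : ℝ) : ℂ) • Matrix.diagonal (fun i => ((f i ^ t : ℝ) : ℂ)) := by
      ext i j
      by_cases h : i = j <;> simp [Matrix.diagonal_apply, h]
    rw [h1, h2, mul_smul_comm, smul_mul_assoc, real_smul_eq]
  -- determinant computation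
  have hdetc : (c • (1 : Matrix (Fin m) (Fin m) ℂ) + A * B).det
      = ((∏ i, (c + d i) : ℝ) : ℂ) := by
    have h1 : c • (1 : Matrix (Fin m) (Fin m) ℂ) + A * B
        = S * (c • (1 : Matrix (Fin m) (Fin m) ℂ) + M) * S' := by
      calc c • (1 : Matrix (Fin m) (Fin m) ℂ) + A * B
          = c • (S * S') + S * M * S' := by rw [hSS', hABconj]
        _ = S * (c • (1 : Matrix (Fin m) (Fin m) ℂ) + M) * S' := by
            rw [Matrix.mul_add, Matrix.add_mul, mul_smul_comm, smul_mul_assoc, mul_one]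
    rw [h1, det_conj_eq hSS']
    have h2 : c • (1 : Matrix (Fin m) (Fin m) ℂ) + M
        = W * Matrix.diagonal (fun i => ((c + d i : ℝ) : ℂ)) * star W := by
      have h4 : Matrix.diagonal (fun i => ((c + d i : ℝ) : ℂ))
          = Matrix.diagonal (fun _ : Fin m => (c : ℂ)) + Matrix.diagonal (fun i => (d i : ℂ)) := by
        ext i j
        by_cases h : i = j <;> simp [Matrix.diagonal_apply, h]
      rw [h4, Matrix.mul_add, Matrix.add_mul, conj_const_diag hWmem, ← hdecM, real_smul_eq]
    rw [h2, det_conj_eq (unitary_mul_star hWmem), Matrix.det_diagonal]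
    push_cast
    rfl
  set P : ℝ := ∏ i, (c + d i) with hPdef
  have hPpos : 0 < P := Finset.prod_pos fun i _ => add_pos hcpos (hdpos i)
  have hre : (c • (1 : Matrix (Fin m) (Fin m) ℂ) + A * B).det.re = P := by
    rw [hdetc, Complex.ofReal_re]
  -- eigenvalue counting
  set k : ℕ := (Finset.univ.filter (fun i => d i = a)).card with hkdef
  have hcards : k + (Finset.univ.filter (fun i => ¬ d i = a)).card = m := by
    rw [hkdef, Finset.card_filter_add_card_filter_not, Finset.card_univ,
      Fintype.card_fin]
  have hkle : k ≤ m := by omega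
  have hcard2 : (Finset.univ.filter (fun i => ¬ d i = a)).card = m - k := by omega
  have hP : P = (c + a) ^ k * (c + b) ^ (m - k) := by
    rw [hPdef, ← Finset.prod_filter_mul_prod_filter_not Finset.univ (fun i => d i = a)]
    congr 1
    · rw [Finset.prod_congr rfl
        (fun i hi => by rw [(Finset.mem_filter.mp hi).2] : ∀ i ∈ Finset.univ.filter (fun i => d i = a), c + d i = c + a),
        Finset.prod_const, hkdef]
    · rw [Finset.prod_congr rfl
        (fun i hi => by
          rcases hd i with h | h
          · exact absurd h (Finset.mem_filter.mp hi).2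
          · rw [h] : ∀ i ∈ Finset.univ.filter (fun i => ¬ d i = a), c + d i = c + b),
        Finset.prod_const, hcard2]
  have hProdd : (∏ i, d i) = a ^ k * b ^ (m - k) := by
    rw [← Finset.prod_filter_mul_prod_filter_not Finset.univ (fun i => d i = a)]
    congr 1
    · rw [Finset.prod_congr rfl
        (fun i hi => (Finset.mem_filter.mp hi).2 : ∀ i ∈ Finset.univ.filter (fun i => d i = a), d i = a),
        Finset.prod_const, hkdef]
    · rw [Finset.prod_congr rfl
        (fun i hi => by
          rcases hd i with h | h
          · exact absurd h (Finset.mem_filter.mp hi).2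
          · exact h : ∀ i ∈ Finset.univ.filter (fun i => ¬ d i = a), d i = b),
        Finset.prod_const, hcard2]
  have hprodd_det : (∏ i, d i) = α * β := by
    have h1 : M.det = ((∏ i, d i : ℝ) : ℂ) := by
      rw [hdecM, det_conj_eq (unitary_mul_star hWmem), Matrix.det_diagonal]
      push_cast
      rfl
    have h2 : M.det = ((α * β : ℝ) : ℂ) := by
      rw [hMdef, Matrix.det_mul, Matrix.det_mul]
      have h3 : S.det * B.det * S.det = (S.det * S.det) * B.det := by ring
      rw [h3, ← Matrix.det_mul, hSS, hα, hβ]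
      push_cast; ring
    rw [h1] at h2
    exact_mod_cast h2
  have habk : a ^ k * b ^ (m - k) = c ^ m := by rw [← hProdd, hprodd_det, ← hcm]
  have hkm : a = b ∨ 2 * k = m := by
    by_cases hab' : a = b
    · exact Or.inl hab'
    · right
      have hla : Real.log a ≠ Real.log b := by
        intro h
        exact hab' (by rw [← Real.exp_log ha, ← Real.exp_log hb, h])
      have hlog1 := congrArg Real.log habk
      rw [Real.log_mul (pow_ne_zero _ ha.ne') (pow_ne_zero _ hb.ne'), Real.log_pow,
        Real.log_pow, Real.log_pow] at hlog1
      have hlogc : Real.log c = (Real.log a + Real.log b) / 2 := by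
        rw [← hsqrt, Real.log_sqrt (by positivity), Real.log_mul ha.ne' hb.ne']
      rw [hlogc] at hlog1
      have hcast : ((m - k : ℕ) : ℝ) = (m : ℝ) - (k : ℝ) := by exact Nat.cast_sub hkle
      have hzero : (2 * (k:ℝ) - (m:ℝ)) * (Real.log a - Real.log b) = 0 := by
        rw [hcast] at hlog1
        linear_combination 2 * hlog1
      rcases mul_eq_zero.mp hzero with h | h
      · have h5 : ((2 * k : ℕ) : ℝ) = ((m : ℕ) : ℝ) := by push_cast; linarith
        exact_mod_cast h5
      · exact absurd (sub_eq_zero.mp h) hla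
  have hP2 : P ^ 2 = ((c + a) * (c + b)) ^ m := by
    rcases hkm with hab' | hkm2
    · have hda : ∀ i, d i = a := by
        intro i
        rcases hd i with h | h
        · exact h
        · rw [h, ← hab']
      have hPa : P = (c + a) ^ m := by
        rw [hPdef, Finset.prod_congr rfl (fun i _ => by rw [hda i]), Finset.prod_const,
          Finset.card_univ, Fintype.card_fin]
      rw [hPa, ← hab', ← pow_mul, show (c+a)*(c+a) = (c+a)^2 from (sq (c+a)).symm, ← pow_mul,
        mul_comm m 2]
    · rw [hP, show m - k = k by omega, ← mul_pow, ← pow_mul, show k * 2 = m by omega]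
  have hs2 : s ^ 2 = a + b + 2 * c := by
    rw [hsdef]; linear_combination hsqa + hsqb + 2 * hsqab
  have hQ : (c + a) * (c + b) = c * s ^ 2 := by
    rw [hs2]; linear_combination hab
  -- scalar identity
  have hnum : (α * β) ^ (3 * t / (m:ℝ)) = c ^ (3 * t) := by
    rw [← hcm, ← Real.rpow_natCast c m, ← Real.rpow_mul hcpos.le]
    congr 1
    field_simp
  have hden : P ^ (2 * t / (m:ℝ)) = (c * s ^ 2) ^ t := by
    rw [show (2 * t / (m:ℝ)) = 2 * (t / m) by ring, Real.rpow_mul hPpos.le,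
      show (2:ℝ) = ((2:ℕ):ℝ) by norm_num, Real.rpow_natCast, hP2, hQ,
      ← Real.rpow_natCast (c * s ^ 2) m, ← Real.rpow_mul (by positivity)]
    congr 1
    field_simp
  have hscalar : (α * β) ^ (3 * t / (m:ℝ)) / P ^ (2 * t / (m:ℝ)) = (c/s)^t * (c/s)^t := by
    rw [hnum, hden, Real.div_rpow hcpos.le hspos.le,
      Real.mul_rpow hcpos.le (by positivity : (0:ℝ) ≤ s ^ 2)]
    have h1 : ((s:ℝ) ^ 2) ^ t = s ^ t * s ^ t := by
      rw [sq, Real.mul_rpow hspos.le hspos.le]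
    have h2 : c ^ (3 * t) = c ^ t * c ^ t * c ^ t := by
      rw [← Real.rpow_add hcpos, ← Real.rpow_add hcpos]
      congr 1
      ring
    rw [h1, h2]
    have hct : c ^ t ≠ 0 := (Real.rpow_pos_of_pos hcpos t).ne'
    have hst : s ^ t ≠ 0 := (Real.rpow_pos_of_pos hspos t).ne'
    field_simp
  -- final assembly
  unfold spectralMean
  rw [hmpowG, smul_mul_assoc, smul_mul_assoc, mul_smul_comm, smul_smul, hre, hscalar]
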